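/- Under the Friedmann limit hypotheses, define the energy density ρ(τ) = (3/(8π))·[(a′(τ)/a(τ))² − 1/a(τ)²] and the pressure p(τ) = −(1/(8π))·(2a″(τ)/a(τ)) − (1/3)ρ(τ). Then ρ(τ) → 3α/(8π) and p(τ) → −3α/(8π) as τ → 0⁺; in particular lim_{τ→0⁺} ρ(τ) = −lim_{τ→0⁺} p(τ), so the initial energy density and pressure have the form of a cosmological constant. -/

import Mathlib

open Filter Topology

/-- Under the Friedmann limit hypotheses, the Friedmann energy density
`ρ = (3/(8π))[(a′/a)² − 1/a²]` and pressure `p = −(1/(8π))(2a″/a) − ρ/3` satisfy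
`ρ(τ) → 3α/(8π)` and `p(τ) → −3α/(8π)` as `τ → 0⁺`; in particular
`lim ρ = − lim p`, so the initial energy density and pressure have the form of a
cosmological constant. -/
theorem friedmann_initial_cosmological_constant
    (α δ : ℝ) (hδ : 0 < δ) (a : ℝ → ℝ)
    (hpos : ∀ τ ∈ Set.Ioo (0 : ℝ) δ, 0 < a τ)
    (hdiff : ∀ τ ∈ Set.Ioo (0 : ℝ) δ, DifferentiableAt ℝ a τ)
    (hdiff2 : ∀ τ ∈ Set.Ioo (0 : ℝ) δ, DifferentiableAt ℝ (deriv a) τ)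
    (hf0 : Tendsto (fun τ => (a τ - τ) / τ) (𝓝[>] (0 : ℝ)) (𝓝 0))
    (hf1 : Tendsto (fun τ => (deriv a τ - 1) / τ) (𝓝[>] (0 : ℝ)) (𝓝 0))
    (hf2 : Tendsto (fun τ => deriv (deriv a) τ / τ) (𝓝[>] (0 : ℝ)) (𝓝 α))
    (ρ p : ℝ → ℝ)
    (hρ : ∀ τ ∈ Set.Ioo (0 : ℝ) δ,
      ρ τ = (3 / (8 * Real.pi)) * ((deriv a τ / a τ) ^ 2 - 1 / (a τ) ^ 2))
    (hp : ∀ τ ∈ Set.Ioo (0 : ℝ) δ,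
      p τ = -(1 / (8 * Real.pi)) * (2 * deriv (deriv a) τ / a τ) - (1 / 3) * ρ τ) :
    Tendsto ρ (𝓝[>] (0 : ℝ)) (𝓝 (3 * α / (8 * Real.pi))) ∧
    Tendsto p (𝓝[>] (0 : ℝ)) (𝓝 (-(3 * α / (8 * Real.pi)))) := by
  have hmem : Set.Ioo (0 : ℝ) δ ∈ 𝓝[>] (0 : ℝ) :=
    Ioo_mem_nhdsGT_of_mem ⟨le_refl 0, hδ⟩
  have hpos' : ∀ᶠ τ in 𝓝[>] (0 : ℝ), τ ∈ Set.Ioo (0 : ℝ) δ := hmem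
  have hτpos : ∀ᶠ τ in 𝓝[>] (0 : ℝ), (0 : ℝ) < τ := self_mem_nhdsWithin
  have hid : Tendsto (fun τ : ℝ => τ) (𝓝[>] (0 : ℝ)) (𝓝 0) :=
    tendsto_id.mono_left nhdsWithin_le_nhds
  -- a τ / τ → 1
  have ha_div : Tendsto (fun τ => a τ / τ) (𝓝[>] (0 : ℝ)) (𝓝 1) := by
    have h := hf0.add (tendsto_const_nhds (x := (1 : ℝ)))
    rw [zero_add] at h
    refine h.congr' ?_
    filter_upwards [hτpos] with τ hτ
    field_simp
    ring
  -- τ / a τ → 1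
  have hτa : Tendsto (fun τ => τ / a τ) (𝓝[>] (0 : ℝ)) (𝓝 1) := by
    have h := ha_div.inv₀ one_ne_zero
    rw [inv_one] at h
    refine h.congr' ?_
    filter_upwards [hτpos] with τ hτ
    rw [← one_div, one_div_div]
  -- a → 0
  have ha0 : Tendsto a (𝓝[>] (0 : ℝ)) (𝓝 0) := by
    have h := ha_div.mul hid
    rw [one_mul] at h
    refine h.congr' ?_
    filter_upwards [hτpos] with τ hτ
    field_simp
  -- deriv a → 1
  have ha1 : Tendsto (deriv a) (𝓝[>] (0 : ℝ)) (𝓝 1) := by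
    have h := (hf1.mul hid).add (tendsto_const_nhds (x := (1 : ℝ)))
    rw [zero_mul, zero_add] at h
    refine h.congr' ?_
    filter_upwards [hτpos] with τ hτ
    field_simp
    ring
  have ha'pos : ∀ᶠ τ in 𝓝[>] (0 : ℝ), (0 : ℝ) < deriv a τ :=
    ha1.eventually (eventually_gt_nhds one_pos)
  -- L'Hôpital setup
  have hff' : ∀ᶠ τ in 𝓝[>] (0 : ℝ),
      HasDerivAt (fun x => deriv a x ^ 2 - 1) (2 * deriv a τ * deriv (deriv a) τ) τ := by
    filter_upwards [hpos'] with τ hτ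
    have h := ((hdiff2 τ hτ).hasDerivAt.pow 2).sub_const 1
    simpa [mul_comm, mul_assoc, mul_left_comm] using h
  have hgg' : ∀ᶠ τ in 𝓝[>] (0 : ℝ),
      HasDerivAt (fun x => a x ^ 2) (2 * a τ * deriv a τ) τ := by
    filter_upwards [hpos'] with τ hτ
    have h : HasDerivAt (fun x => a x ^ 2) _ τ := (hdiff τ hτ).hasDerivAt.pow 2
    simpa [mul_comm, mul_assoc, mul_left_comm] using h
  have hg' : ∀ᶠ τ in 𝓝[>] (0 : ℝ), 2 * a τ * deriv a τ ≠ 0 := by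
    filter_upwards [hpos', ha'pos] with τ hτ h'
    have := hpos τ hτ
    positivity
  have hF0 : Tendsto (fun τ => deriv a τ ^ 2 - 1) (𝓝[>] (0 : ℝ)) (𝓝 0) := by
    have h := (ha1.pow 2).sub (tendsto_const_nhds (x := (1 : ℝ)))
    norm_num at h
    exact h
  have hG0 : Tendsto (fun τ => a τ ^ 2) (𝓝[>] (0 : ℝ)) (𝓝 0) := by
    have h := ha0.pow 2
    norm_num at h
    exact h
  have hdivlim : Tendsto
      (fun τ => (2 * deriv a τ * deriv (deriv a) τ) / (2 * a τ * deriv a τ))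
      (𝓝[>] (0 : ℝ)) (𝓝 α) := by
    have h := hf2.mul hτa
    rw [mul_one] at h
    refine h.congr' ?_
    filter_upwards [hpos', ha'pos, hτpos] with τ hτ h' hτ0
    have h1 := (hpos τ hτ).ne'
    have h2 := h'.ne'
    field_simp
  have hFG : Tendsto (fun τ => (deriv a τ ^ 2 - 1) / (a τ ^ 2)) (𝓝[>] (0 : ℝ)) (𝓝 α) :=
    HasDerivAt.lhopital_zero_nhdsGT hff' hgg' hg' hF0 hG0 hdivlim
  have hπ : (8 * Real.pi) ≠ 0 := by positivity
  -- ρ limit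
  have hρlim : Tendsto ρ (𝓝[>] (0 : ℝ)) (𝓝 (3 * α / (8 * Real.pi))) := by
    have h := hFG.const_mul (3 / (8 * Real.pi))
    have heq : 3 / (8 * Real.pi) * α = 3 * α / (8 * Real.pi) := by ring
    rw [heq] at h
    refine h.congr' ?_
    filter_upwards [hpos'] with τ hτ
    rw [hρ τ hτ]
    have h1 := (hpos τ hτ).ne'
    field_simp
  refine ⟨hρlim, ?_⟩
  -- 2 a'' / a → 2α
  have h2a : Tendsto (fun τ => 2 * deriv (deriv a) τ / a τ) (𝓝[>] (0 : ℝ)) (𝓝 (2 * α)) := by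
    have h := (hf2.mul hτa).const_mul 2
    rw [mul_one] at h
    refine h.congr' ?_
    filter_upwards [hpos', hτpos] with τ hτ hτ0
    have h1 := (hpos τ hτ).ne'
    field_simp
  have h := (h2a.const_mul (-(1 / (8 * Real.pi)))).sub (hρlim.const_mul (1 / 3))
  have heq : -(1 / (8 * Real.pi)) * (2 * α) - 1 / 3 * (3 * α / (8 * Real.pi))
      = -(3 * α / (8 * Real.pi)) := by field_simp; ring
  rw [heq] at h
  refine h.congr' ?_
  filter_upwards [hpos'] with τ hτ
  rw [hp τ hτ]
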